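/- There is a natural identification of the tangent space of the deformation functor of a Poisson morphism f:(X,Λ₀)→(Y,Π₀) leaving domain and target fixed with the 0-th hypercohomology of the complex f^*T_Y^•: Def_{(X,Λ₀)/f/(Y,Π₀)}(k[ε]) ≅ ℍ⁰(X, f^*T_Y^•). -/

import Mathlib

/-!
STATEMENT 12.  Natural identification
`Def_{(X,Λ₀)/f/(Y,Π₀)}(k[ε]) ≅ ℍ⁰(X, f^*T_Y^•)`.

Affine model: first-order deformations of `f` with fixed (trivially deformed) domain and
target are Poisson `k[ε]`-algebra homomorphisms `Φ : C[ε] → B[ε]` inducing `f` mod `ε`;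
`ℍ⁰(X,f^*T_Y^•)` is the space of derivations `v ∈ Der_k(C,B) = Hom_C(Ω_{C/k},B)` with
`π(v) = 0`.  The identification is the bijection `v ↦ f + εv`, stated as:
the map is well defined, injective and surjective.
-/

structure PoissonBracket (R₀ R : Type*) [CommRing R₀] [CommRing R] [Algebra R₀ R] where
  br : R → R → R
  add_left : ∀ a b c, br (a + b) c = br a c + br b c
  smul_left : ∀ (r : R₀) (a b : R), br (r • a) b = r • br a b
  antisymm : ∀ a b, br a b = - br b a
  leibniz : ∀ a b c, br a (b * c) = br a b * c + b * br a c
  jacobi : ∀ a b c, br a (br b c) + br b (br c a) + br c (br a b) = 0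

/-- `ε`-bilinear extension of a bracket to dual numbers. -/
def extBr {R : Type*} [CommRing R] (P : R → R → R) :
    DualNumber R → DualNumber R → DualNumber R := fun a b =>
  TrivSqZeroExt.inl (P a.fst b.fst) + TrivSqZeroExt.inr (P a.fst b.snd + P a.snd b.fst)

/-- The map `f + εv : C[ε] → B[ε]`. -/
def phiMap {B C : Type*} [CommRing B] [CommRing C] (f : C → B) (v : C → B) :
    DualNumber C → DualNumber B := fun c =>
  TrivSqZeroExt.inl (f c.fst) + TrivSqZeroExt.inr (v c.fst + f c.snd)

variable {k B C : Type*} [Field k] [CommRing B] [CommRing C] [Algebra k B] [Algebra k C]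

section Aux
variable {k B C : Type*} [Field k] [CommRing B] [CommRing C] [Algebra k B] [Algebra k C]

lemma PoissonBracket.br_zero_left {R₀ R : Type*} [CommRing R₀] [CommRing R] [Algebra R₀ R]
    (P : PoissonBracket R₀ R) (a : R) : P.br 0 a = 0 := by
  have h := P.add_left 0 0 a
  simp only [add_zero] at h
  exact right_eq_add.mp h

lemma PoissonBracket.br_zero_right {R₀ R : Type*} [CommRing R₀] [CommRing R] [Algebra R₀ R]
    (P : PoissonBracket R₀ R) (a : R) : P.br a 0 = 0 := by
  rw [P.antisymm, P.br_zero_left, neg_zero]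

lemma PoissonBracket.add_right {R₀ R : Type*} [CommRing R₀] [CommRing R] [Algebra R₀ R]
    (P : PoissonBracket R₀ R) (a b c : R) : P.br a (b + c) = P.br a b + P.br a c := by
  rw [P.antisymm, P.add_left, P.antisymm b a, P.antisymm c a]
  ring

lemma snd_mul' {R : Type*} [CommRing R] (x y : DualNumber R) :
    (x * y).snd = x.fst * y.snd + y.fst * x.snd := by
  simp [TrivSqZeroExt.snd_mul, smul_eq_mul, mul_comm]

lemma fst_eps_mul {R : Type*} [CommRing R] (x : DualNumber R) :
    ((DualNumber.eps : DualNumber R) * x).fst = 0 := by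
  simp [TrivSqZeroExt.fst_mul]

lemma snd_eps_mul {R : Type*} [CommRing R] (x : DualNumber R) :
    ((DualNumber.eps : DualNumber R) * x).snd = x.fst := by
  simp [TrivSqZeroExt.snd_mul, smul_eq_mul]

lemma fst_phiMap (f : C → B) (v : C → B) (x : DualNumber C) :
    (phiMap f v x).fst = f x.fst := by simp [phiMap]

lemma snd_phiMap (f : C → B) (v : C → B) (x : DualNumber C) :
    (phiMap f v x).snd = v x.fst + f x.snd := by simp [phiMap]

lemma fst_extBr {R : Type*} [CommRing R] (Q : R → R → R) (x y : DualNumber R) :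
    (extBr Q x y).fst = Q x.fst y.fst := by simp [extBr]

lemma snd_extBr {R : Type*} [CommRing R] (Q : R → R → R) (x y : DualNumber R) :
    (extBr Q x y).snd = Q x.fst y.snd + Q x.snd y.fst := by simp [extBr]

end Aux

/-- A first-order deformation of `f` over `k[ε]` leaving domain and target fixed:
a Poisson `k[ε]`-algebra homomorphism `(C[ε],Π) → (B[ε],Λ)` inducing `f` modulo `ε`. -/


def IsFirstOrderDef (L : PoissonBracket k B) (P : PoissonBracket k C) (f : C →ₐ[k] B)
    (Φ : DualNumber C → DualNumber B) : Prop :=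
  (∀ x y, Φ (x + y) = Φ x + Φ y) ∧
  (∀ x y, Φ (x * y) = Φ x * Φ y) ∧
  Φ 1 = 1 ∧
  (∀ (r : k) (x : DualNumber C), Φ (r • x) = r • Φ x) ∧
  (∀ x : DualNumber C,
    Φ ((DualNumber.eps : DualNumber C) * x) = (DualNumber.eps : DualNumber B) * Φ x) ∧
  (∀ x y, Φ (extBr P.br x y) = extBr L.br (Φ x) (Φ y)) ∧
  (∀ x : DualNumber C, (Φ x).fst = f x.fst)

/-- An element of `ℍ⁰(X, f^*T_Y^•)`: a derivation `v ∈ Der_k(C,B)` with `π(v) = 0`. -/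
def IsH0Class (L : PoissonBracket k B) (P : PoissonBracket k C) (f : C →ₐ[k] B)
    (v : C → B) : Prop :=
  (∀ a b, v (a + b) = v a + v b) ∧
  (∀ (r : k) (a : C), v (r • a) = r • v a) ∧
  (∀ a b, v (a * b) = f a * v b + f b * v a) ∧
  (∀ a b, L.br (v a) (f b) + L.br (f a) (v b) - v (P.br a b) = 0)

lemma h0_v_zero (L : PoissonBracket k B) (P : PoissonBracket k C) (f : C →ₐ[k] B)
    {v : C → B} (hv : IsH0Class L P f v) : v 0 = 0 := by
  have := hv.1 0 0
  simp only [add_zero] at this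
  exact (right_eq_add.mp this)

lemma h0_v_one (L : PoissonBracket k B) (P : PoissonBracket k C) (f : C →ₐ[k] B)
    {v : C → B} (hv : IsH0Class L P f v) : v 1 = 0 := by
  have := hv.2.2.1 1 1
  simp only [mul_one, map_one, one_mul] at this
  exact (right_eq_add.mp this)


/-- `v ↦ f + εv` is a bijection between `ℍ⁰(X,f^*T_Y^•)` and
`Def_{(X,Λ₀)/f/(Y,Π₀)}(k[ε])`. -/
theorem stmt12 (L : PoissonBracket k B) (P : PoissonBracket k C) (f : C →ₐ[k] B)
    (hf : ∀ a b, f (P.br a b) = L.br (f a) (f b)) :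
    -- well defined
    ((∀ v : C → B, IsH0Class L P f v → IsFirstOrderDef L P f (phiMap (⇑f) v))
    -- injective
    ∧ (∀ v w : C → B, IsH0Class L P f v → IsH0Class L P f w →
        phiMap (⇑f) v = phiMap (⇑f) w → v = w)
    -- surjective
    ∧ (∀ Φ : DualNumber C → DualNumber B, IsFirstOrderDef L P f Φ →
        ∃ v : C → B, IsH0Class L P f v ∧ phiMap (⇑f) v = Φ)) := by
  classical
  have hsndmul : ∀ x y : DualNumber B, (x * y).snd = x.fst * y.snd + y.fst * x.snd := snd_mul'
  have hsndmulC : ∀ x y : DualNumber C, (x * y).snd = x.fst * y.snd + y.fst * x.snd := snd_mul'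
  refine ⟨?_, ?_, ?_⟩
  · -- well defined
    intro v hv
    obtain ⟨hadd, hsmul, hmul, hbr⟩ := hv
    have hv0 : v 0 = 0 := h0_v_zero L P f ⟨hadd, hsmul, hmul, hbr⟩
    have hv1 : v 1 = 0 := h0_v_one L P f ⟨hadd, hsmul, hmul, hbr⟩
    refine ⟨?_, ?_, ?_, ?_, ?_, ?_, fun x => fst_phiMap _ _ _⟩
    · intro x y
      ext
      · simp [fst_phiMap, map_add]
      · simp only [snd_phiMap, TrivSqZeroExt.snd_add, TrivSqZeroExt.fst_add, hadd, map_add]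
        ring
    · intro x y
      ext
      · simp [fst_phiMap, TrivSqZeroExt.fst_mul, map_mul]
      · simp only [snd_phiMap, hsndmul, hsndmulC, fst_phiMap, TrivSqZeroExt.fst_mul,
          hmul, map_add, map_mul]
        ring
    · ext
      · simp [fst_phiMap]
      · simp [snd_phiMap, hv1]
    · intro r x
      ext
      · simp only [fst_phiMap, TrivSqZeroExt.fst_smul, map_smul]
      · simp only [snd_phiMap, TrivSqZeroExt.snd_smul, TrivSqZeroExt.fst_smul, hsmul,
          map_smul, smul_add]
    · intro x
      ext
      · simp [fst_phiMap, fst_eps_mul]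
      · simp [snd_phiMap, snd_eps_mul, fst_phiMap, hv0]
    · intro x y
      ext
      · simp only [fst_phiMap, fst_extBr, hf]
      · simp only [snd_phiMap, snd_extBr, fst_extBr, fst_phiMap, map_add, hf]
        have h1 : L.br (f x.fst) (v y.fst + f y.snd)
            = L.br (f x.fst) (v y.fst) + L.br (f x.fst) (f y.snd) := L.add_right _ _ _
        have h2 : L.br (v x.fst + f x.snd) (f y.fst)
            = L.br (v x.fst) (f y.fst) + L.br (f x.snd) (f y.fst) := L.add_left _ _ _
        rw [h1, h2]
        have := hbr x.fst y.fst
        linear_combination -this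
  · -- injective
    intro v w hv hw h
    funext c
    have := congrArg (fun Φ => (Φ (TrivSqZeroExt.inl c)).snd) h
    simpa [snd_phiMap] using this
  · -- surjective
    intro Φ hΦ
    obtain ⟨hadd, hmul, hone, hsmul, heps, hbr, hfst⟩ := hΦ
    set v : C → B := fun c => (Φ (TrivSqZeroExt.inl c)).snd with hvdef
    -- key: snd of Φ x
    have hsnd : ∀ x : DualNumber C, (Φ x).snd = v x.fst + f x.snd := by
      intro x
      have hx : x = TrivSqZeroExt.inl x.fst
          + (DualNumber.eps : DualNumber C) * TrivSqZeroExt.inl x.snd := by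
        ext
        · simp [fst_eps_mul]
        · simp [snd_eps_mul]
      calc (Φ x).snd
          = (Φ (TrivSqZeroExt.inl x.fst)
            + Φ ((DualNumber.eps : DualNumber C) * TrivSqZeroExt.inl x.snd)).snd := by
            rw [← hadd, ← hx]
        _ = v x.fst + f x.snd := by
            rw [heps]
            simp [snd_eps_mul, hfst, hvdef]
    have hvadd : ∀ a b : C, v (a + b) = v a + v b := by
      intro a b
      have : (TrivSqZeroExt.inl (a + b) : DualNumber C)
          = TrivSqZeroExt.inl a + TrivSqZeroExt.inl b := by ext <;> simp
      simp [hvdef, this, hadd]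
    have hvsmul : ∀ (r : k) (a : C), v (r • a) = r • v a := by
      intro r a
      have : (TrivSqZeroExt.inl (r • a) : DualNumber C)
          = r • TrivSqZeroExt.inl a := by ext <;> simp
      simp [hvdef, this, hsmul]
    have hvmul : ∀ a b : C, v (a * b) = f a * v b + f b * v a := by
      intro a b
      have : (TrivSqZeroExt.inl (a * b) : DualNumber C)
          = TrivSqZeroExt.inl a * TrivSqZeroExt.inl b := by
        ext <;> simp [TrivSqZeroExt.fst_mul, hsndmulC]
      rw [hvdef]
      simp only [this, hmul, hsndmul, hfst]
      simp
    have hvbr : ∀ a b : C,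
        L.br (v a) (f b) + L.br (f a) (v b) - v (P.br a b) = 0 := by
      intro a b
      have hext : extBr P.br (TrivSqZeroExt.inl a) (TrivSqZeroExt.inl b)
          = (TrivSqZeroExt.inl (P.br a b) : DualNumber C) := by
        ext
        · simp [fst_extBr]
        · simp [snd_extBr, P.br_zero_left, P.br_zero_right]
      have := congrArg TrivSqZeroExt.snd
        (hbr (TrivSqZeroExt.inl a) (TrivSqZeroExt.inl b))
      rw [hext] at this
      rw [snd_extBr] at this
      simp only [hfst, TrivSqZeroExt.fst_inl] at this
      rw [show (v (P.br a b)) = (Φ (TrivSqZeroExt.inl (P.br a b))).snd from rfl, this]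
      have hLa0 : L.br (f a) ((Φ (TrivSqZeroExt.inl b)).snd) = L.br (f a) (v b) := rfl
      have hL0b : L.br ((Φ (TrivSqZeroExt.inl a)).snd) (f b) = L.br (v a) (f b) := rfl
      rw [hLa0, hL0b]
      ring
    refine ⟨v, ⟨hvadd, hvsmul, hvmul, hvbr⟩, ?_⟩
    funext x
    ext
    · rw [fst_phiMap, hfst]
    · rw [snd_phiMap, hsnd]
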